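/- Let k be a field, V a k-vector space of finite odd dimension n, Q : V → k a quadratic form, and (b i)_{i ∈ Fin n} an orthogonal basis of V for Q, with associated element d := ι(b 0)·ι(b 1)⋯ι(b (n−1)) ∈ CliffordAlgebra Q. Then d lies in the center of CliffordAlgebra Q, i.e. d·x = x·d for every x ∈ CliffordAlgebra Q. -/

import Mathlib

open CliffordAlgebra

private lemma aux_anticomm {k V : Type*} [Field k] [AddCommGroup V] [Module k V]
    {Q : QuadraticForm k V} (v : V) :
    ∀ l : List V, (∀ w ∈ l, ι Q v * ι Q w = -(ι Q w * ι Q v)) →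
      ι Q v * (l.map (ι Q)).prod = ((-1 : ℤ) ^ l.length) • ((l.map (ι Q)).prod * ι Q v)
  | [], _ => by simp
  | w :: t, h => by
    have h1 : ι Q v * ι Q w = -(ι Q w * ι Q v) := h w List.mem_cons_self
    have ih := aux_anticomm v t fun x hx => h x (List.mem_cons_of_mem _ hx)
    simp only [List.map_cons, List.prod_cons, List.length_cons, pow_succ]
    rw [← mul_assoc, h1, neg_mul, mul_assoc, ih]
    simp only [List.length_cons, pow_succ, mul_neg, mul_one, neg_smul, neg_neg, zsmul_eq_mul,
      Int.cast_pow, Int.cast_neg, Int.cast_one, mul_assoc]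
    rw [← mul_assoc ((ι Q) w), ← ((Commute.neg_one_left ((ι Q) w)).pow_left t.length).eq, mul_assoc]

/-- If `b` is an orthogonal basis for `Q` on a space of odd dimension `n` and
`d = ι(b 0) ⋯ ι(b (n-1))`, then `d` is central in the Clifford algebra. -/
theorem clifford_d_central_of_odd
    (k : Type*) [Field k]
    (V : Type*) [AddCommGroup V] [Module k V]
    (n : ℕ) (hn : Odd n) (Q : QuadraticForm k V) (b : Module.Basis (Fin n) k V)
    (horth : ∀ i j : Fin n, i ≠ j → QuadraticMap.polar Q (b i) (b j) = 0)
    (d : CliffordAlgebra Q) (hd : d = (List.ofFn fun i : Fin n => ι Q (b i)).prod) :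
    ∀ x : CliffordAlgebra Q, d * x = x * d := by
  -- d commutes with every generator ι (b j)
  have key : ∀ j : Fin n, ι Q (b j) * d = d * ι Q (b j) := by
    intro j
    set l : List V := List.ofFn b with hl
    have hlen : l.length = n := by simp [hl]
    have hmap : d = (l.map (ι Q)).prod := by
      rw [hd, hl, List.map_ofFn]; rfl
    have hjlt : (j : ℕ) < l.length := by rw [hlen]; exact j.isLt
    have hget : l[(j : ℕ)] = b j := by simp [hl]
    -- split l = A ++ b j :: B
    have hsplit : l = l.take j ++ b j :: l.drop (j + 1) := by
      conv_lhs => rw [← List.take_append_drop (j : ℕ) l]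
      congr 1
      rw [← hget]
      exact (List.getElem_cons_drop hjlt).symm
    -- anticommutation with other basis vectors
    have anti : ∀ i : Fin n, i ≠ j → ι Q (b j) * ι Q (b i) = -(ι Q (b i) * ι Q (b j)) := by
      intro i hij
      have h0 := ι_mul_ι_add_swap (Q := Q) (b j) (b i)
      rw [horth j i (fun h => hij h.symm), map_zero] at h0
      exact eq_neg_of_add_eq_zero_left h0
    have hA : ∀ w ∈ l.take (j : ℕ), ι Q (b j) * ι Q w = -(ι Q w * ι Q (b j)) := by
      intro w hw
      rw [List.mem_take_iff_getElem] at hw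
      obtain ⟨i, hi, rfl⟩ := hw
      have hi' : i < n := lt_of_lt_of_le hi (le_trans (min_le_right _ _) hlen.le)
      have : l[i] = b ⟨i, hi'⟩ := by simp [hl]
      rw [this]
      exact anti _ (fun h => absurd (congrArg Fin.val h) (by
        simp only [Fin.val_mk]
        exact Nat.ne_of_lt (lt_of_lt_of_le hi (min_le_left _ _))))
    have hB : ∀ w ∈ l.drop ((j : ℕ) + 1), ι Q (b j) * ι Q w = -(ι Q w * ι Q (b j)) := by
      intro w hw
      rw [List.mem_drop_iff_getElem] at hw
      obtain ⟨i, hi, rfl⟩ := hw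
      have hi' : (j : ℕ) + 1 + i < n := by have h2 := hi; rw [hlen] at h2; omega
      have : l[(j : ℕ) + 1 + i] = b ⟨(j : ℕ) + 1 + i, hi'⟩ := by simp [hl]
      rw [this]
      exact anti _ (fun h => by
        have := congrArg Fin.val h
        simp only [Fin.val_mk] at this
        omega)
    set pA := ((l.take (j : ℕ)).map (ι Q)).prod with hpA
    set pB := ((l.drop ((j : ℕ) + 1)).map (ι Q)).prod with hpB
    have hdfac : d = pA * (ι Q (b j) * pB) := by
      rw [hmap]
      conv_lhs => rw [hsplit]
      rw [List.map_append, List.prod_append, List.map_cons, List.prod_cons]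
    have hlenA : (l.take (j : ℕ)).length = (j : ℕ) := by
      rw [List.length_take, hlen]; exact min_eq_left j.isLt.le
    have hlenB : (l.drop ((j : ℕ) + 1)).length = n - 1 - (j : ℕ) := by
      rw [List.length_drop, hlen]; omega
    have auxA := aux_anticomm (Q := Q) (b j) _ hA
    have auxB := aux_anticomm (Q := Q) (b j) _ hB
    rw [hlenA, ← hpA] at auxA
    rw [hlenB, ← hpB] at auxB
    -- sign arithmetic
    have hsq : ((-1 : ℤ) ^ (j : ℕ)) * ((-1 : ℤ) ^ (j : ℕ)) = 1 := by
      rw [← pow_add]; exact Even.neg_one_pow ⟨(j : ℕ), rfl⟩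
    have hsign : ((-1 : ℤ) ^ (n - 1 - (j : ℕ))) = (-1 : ℤ) ^ (j : ℕ) := by
      have h1 : ((-1 : ℤ) ^ (n - 1 - (j : ℕ))) * ((-1 : ℤ) ^ (j : ℕ)) = 1 := by
        rw [← pow_add]
        have : n - 1 - (j : ℕ) + (j : ℕ) = n - 1 := by have := j.isLt; omega
        rw [this]
        exact Even.neg_one_pow (Nat.Odd.sub_odd hn odd_one)
      calc ((-1 : ℤ) ^ (n - 1 - (j : ℕ)))
          = ((-1 : ℤ) ^ (n - 1 - (j : ℕ))) * (((-1 : ℤ) ^ (j : ℕ)) * ((-1 : ℤ) ^ (j : ℕ))) := by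
            rw [hsq, mul_one]
        _ = (-1 : ℤ) ^ (j : ℕ) := by rw [← mul_assoc, h1, one_mul]
    have hBs : pB * ι Q (b j) = ((-1 : ℤ) ^ (n - 1 - (j : ℕ))) • (ι Q (b j) * pB) := by
      rw [auxB, hsign, smul_smul, hsq, one_smul]
    rw [hdfac, ← mul_assoc, auxA, smul_mul_assoc, mul_assoc,
      mul_assoc pA (ι Q (b j) * pB) (ι Q (b j)), mul_assoc (ι Q (b j)) pB (ι Q (b j)),
      hBs, hsign, mul_smul_comm, mul_smul_comm]
  intro x
  induction x using CliffordAlgebra.induction with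
  | algebraMap r => rw [Algebra.commutes]
  | ι v =>
    rw [show v = ∑ i, b.repr v i • b i from (b.sum_repr v).symm]
    simp only [map_sum, map_smul, Finset.mul_sum, Finset.sum_mul, mul_smul_comm,
      smul_mul_assoc, ← key]
  | mul x y hx hy => rw [mul_assoc, ← hy, ← mul_assoc, hx, mul_assoc]
  | add x y hx hy => rw [mul_add, add_mul, hx, hy]
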